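/- The expected positive spread of the TS-N model, f̃^+(S) = E_{X,Y}[|B^+(S)|], where the expectation is over the random multinomial in-neighbor sampling X and the random correction sampling Y, is a monotone and submodular function of the seed set S ⊆ V. -/

import Mathlib

/-- `anc parent v k` is the `k`-fold iterated live in-neighbor of `v` in a live-edge subgraph
in which every node has at most one incoming live edge; the subgraph is encoded by
`parent : V → Option V`, where `parent v = some u` means that the live edge `(u, v)` is
present. -/
def anc {V : Type*} (parent : V → Option V) (v : V) : ℕ → Option V
  | 0 => some v
  | k + 1 => (anc parent v k).bind parent

/-- `v` is reachable from the seed set `S` in the live-edge subgraph, i.e. `v ∈ B(S)`. -/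
def reaches {V : Type*} (parent : V → Option V) (S : Finset V) (v : V) : Prop :=
  ∃ k s, anc parent v k = some s ∧ s ∈ S

/-- The distance from `v` to its nearest seed ancestor along the chain of live in-neighbors. -/
noncomputable def seedDist {V : Type*} (parent : V → Option V) (S : Finset V) (v : V) : ℕ :=
  sInf {k | ∃ s, anc parent v k = some s ∧ s ∈ S}

/-- The sign label of the `j`-th edge on the unique live path into `v`, counted backwards
from `v` (so `j = 0` is the live edge into `v` itself).  `Y u` denotes the label of the
unique live edge into `u` (and is irrelevant when `u` has no live in-edge). -/
def labelAt {V : Type*} (parent : V → Option V) (Y : V → SignType) (v : V) (j : ℕ) :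
    SignType :=
  (anc parent v j).elim 0 Y

/-- `v ∈ B^+(S)`: `v` is reachable from `S`, and on the live path from its nearest seed
ancestor either every edge label is `0`, or the last edge with a nonzero label has label
`+1`. -/
def posNode {V : Type*} (parent : V → Option V) (Y : V → SignType) (S : Finset V)
    (v : V) : Prop :=
  reaches parent S v ∧
    ((∀ j < seedDist parent S v, labelAt parent Y v j = 0) ∨
      ∃ j < seedDist parent S v, labelAt parent Y v j = SignType.pos ∧
        ∀ i < j, labelAt parent Y v i = 0)

/-- The set `B^+(S)` of positively activated nodes. -/
def Bpos {V : Type*} (parent : V → Option V) (Y : V → SignType) (S : Finset V) : Set V :=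
  {v | posNode parent Y S v}


open MeasureTheory
open scoped Classical

/-- The uniform distribution on `[0,1]`. -/
noncomputable def unif : Measure ℝ := volume.restrict (Set.Icc (0 : ℝ) 1)

/-- Cumulative weight, at node `v`, of the in-neighbors preceding `u` in the fixed
enumeration `e` of the nodes. -/
noncomputable def cumBefore {V : Type*} [Fintype V] (w : V → V → ℝ)
    (e : V ≃ Fin (Fintype.card V)) (v u : V) : ℝ :=
  ∑ u' ∈ Finset.univ.filter (fun u' => e u' < e u), w u' v

/-- The multinomial in-neighbor sampling: node `v` selects in-neighbor `u` exactly when the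
uniform sample `r v` falls in the interval `[cum(u), cum(u) + w(u,v))`, so `u` is selected
with probability `w(u,v)` and nothing is selected with probability `1 − Σ_u w(u,v)`. -/
noncomputable def sampledParent {V : Type*} [Fintype V] (w : V → V → ℝ)
    (e : V ≃ Fin (Fintype.card V)) (r : V → ℝ) (v : V) : Option V :=
  if h : ∃ u, cumBefore w e v u ≤ r v ∧ r v < cumBefore w e v u + w u v then some h.choose
  else none

/-- The correction sampling: the live edge into `v` receives label `+1` with probability
`q^+(v)`, label `0` with probability `1 − q^+(v) − q^-(v)`, and label `−1` with probability
`q^-(v)`, realized from the uniform sample `y v`. -/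
noncomputable def sampledSign {V : Type*} (qp qm : V → ℝ) (y : V → ℝ) (v : V) : SignType :=
  if y v < qp v then SignType.pos
  else if y v < qp v + (1 - (qp v + qm v)) then SignType.zero
  else SignType.neg

/-- The expected positive spread of the TS-N model,
`f̃^+(S) = E_{X,Y}[|B^+(S)|]`, the expectation being over the random multinomial in-neighbor
sampling `X` and the random correction sampling `Y`. -/
noncomputable def tsnExpPos {V : Type*} [Fintype V] [DecidableEq V] (w : V → V → ℝ)
    (qp qm : V → ℝ) (e : V ≃ Fin (Fintype.card V)) (S : Finset V) : ℝ :=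
  ∫ ω : (V → ℝ) × (V → ℝ),
      ((Bpos (sampledParent w e ω.1) (sampledSign qp qm ω.2) S).ncard : ℝ)
    ∂((Measure.pi fun _ : V => unif).prod (Measure.pi fun _ : V => unif))


section Aux

variable {V : Type*}

lemma posNode_mono {parent : V → Option V} {Y : V → SignType} {S T : Finset V}
    (hST : S ⊆ T) {v : V} (h : posNode parent Y S v) : posNode parent Y T v := by
  obtain ⟨hrS, hsign⟩ := h
  have hreach : reaches parent T v := by
    obtain ⟨k, s, h1, h2⟩ := hrS; exact ⟨k, s, h1, hST h2⟩
  refine ⟨hreach, ?_⟩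
  have hne : {k | ∃ s, anc parent v k = some s ∧ s ∈ S}.Nonempty := by
    obtain ⟨k, s, h1, h2⟩ := hrS; exact ⟨k, s, h1, h2⟩
  obtain ⟨s, h1, h2⟩ := Nat.sInf_mem hne
  have hdT : seedDist parent T v ≤ seedDist parent S v :=
    Nat.sInf_le ⟨s, h1, hST h2⟩
  rcases hsign with hz | ⟨j, hj, hjp, hjz⟩
  · exact Or.inl fun j hj => hz j (lt_of_lt_of_le hj hdT)
  · rcases lt_or_ge j (seedDist parent T v) with hlt | hle
    · exact Or.inr ⟨j, hlt, hjp, hjz⟩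
    · exact Or.inl fun i hi => hjz i (lt_of_lt_of_le hi hle)

lemma posNode_key {parent : V → Option V} {Y : V → SignType} {S T : Finset V}
    [DecidableEq V] (hST : S ⊆ T) {v u : V} (h1 : posNode parent Y (insert v T) u)
    (h2 : ¬ posNode parent Y T u) : posNode parent Y (insert v S) u := by
  obtain ⟨hrT, hsign⟩ := h1
  have hne : {k | ∃ s, anc parent u k = some s ∧ s ∈ insert v T}.Nonempty := by
    obtain ⟨k, s, ha, hb⟩ := hrT; exact ⟨k, s, ha, hb⟩
  obtain ⟨s, hanc, hsmem⟩ := Nat.sInf_mem hne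
  rcases Finset.mem_insert.mp hsmem with rfl | hsT
  · -- nearest seed is v itself
    have hdmem : seedDist parent (insert s T) u ∈
        {k | ∃ s', anc parent u k = some s' ∧ s' ∈ insert s S} :=
      ⟨s, hanc, Finset.mem_insert_self _ _⟩
    have hreach : reaches parent (insert s S) u :=
      ⟨seedDist parent (insert s T) u, s, hanc, Finset.mem_insert_self _ _⟩
    have hle : seedDist parent (insert s S) u ≤ seedDist parent (insert s T) u :=
      Nat.sInf_le hdmem
    have hge : seedDist parent (insert s T) u ≤ seedDist parent (insert s S) u := by
      obtain ⟨s', ha', hb'⟩ := Nat.sInf_mem (⟨_, hdmem⟩ :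
        {k | ∃ s', anc parent u k = some s' ∧ s' ∈ insert s S}.Nonempty)
      refine Nat.sInf_le ⟨s', ha', ?_⟩
      rcases Finset.mem_insert.mp hb' with rfl | hmem
      · exact Finset.mem_insert_self _ _
      · exact Finset.mem_insert_of_mem (hST hmem)
    have heq : seedDist parent (insert s S) u = seedDist parent (insert s T) u :=
      le_antisymm hle hge
    exact ⟨hreach, by rw [heq]; exact hsign⟩
  · exfalso
    apply h2
    have hdmemT : seedDist parent (insert v T) u ∈
        {k | ∃ s', anc parent u k = some s' ∧ s' ∈ T} := ⟨s, hanc, hsT⟩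
    have heq : seedDist parent T u = seedDist parent (insert v T) u := by
      refine le_antisymm (Nat.sInf_le hdmemT) ?_
      obtain ⟨s', ha', hb'⟩ := Nat.sInf_mem (⟨_, hdmemT⟩ :
        {k | ∃ s', anc parent u k = some s' ∧ s' ∈ T}.Nonempty)
      exact Nat.sInf_le ⟨s', ha', Finset.mem_insert_of_mem hb'⟩
    exact ⟨⟨_, s, hanc, hsT⟩, by rw [heq]; exact hsign⟩

lemma Bpos_mono (parent : V → Option V) (Y : V → SignType) {S T : Finset V}
    (hST : S ⊆ T) : Bpos parent Y S ⊆ Bpos parent Y T :=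
  fun _ hu => posNode_mono hST hu

lemma Bpos_card_ineq [Fintype V] [DecidableEq V] (parent : V → Option V)
    (Y : V → SignType) {S T : Finset V} (v : V) (hST : S ⊆ T) :
    ((Bpos parent Y (insert v T)).ncard : ℝ) - ((Bpos parent Y T).ncard : ℝ) ≤
      ((Bpos parent Y (insert v S)).ncard : ℝ) - ((Bpos parent Y S).ncard : ℝ) := by
  have h1 : Bpos parent Y T ⊆ Bpos parent Y (insert v T) :=
    Bpos_mono parent Y (Finset.subset_insert v T)
  have h2 : Bpos parent Y S ⊆ Bpos parent Y (insert v S) :=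
    Bpos_mono parent Y (Finset.subset_insert v S)
  have hdiff : Bpos parent Y (insert v T) \ Bpos parent Y T ⊆
      Bpos parent Y (insert v S) \ Bpos parent Y S := by
    rintro u ⟨hu1, hu2⟩
    exact ⟨posNode_key hST hu1 hu2, fun hS => hu2 (posNode_mono hST hS)⟩
  have e1 : ((Bpos parent Y (insert v T) \ Bpos parent Y T).ncard : ℝ) =
      ((Bpos parent Y (insert v T)).ncard : ℝ) - ((Bpos parent Y T).ncard : ℝ) := by
    rw [Set.ncard_diff h1 (Set.toFinite _),
      Nat.cast_sub (Set.ncard_le_ncard h1 (Set.toFinite _))]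
  have e2 : ((Bpos parent Y (insert v S) \ Bpos parent Y S).ncard : ℝ) =
      ((Bpos parent Y (insert v S)).ncard : ℝ) - ((Bpos parent Y S).ncard : ℝ) := by
    rw [Set.ncard_diff h2 (Set.toFinite _),
      Nat.cast_sub (Set.ncard_le_ncard h2 (Set.toFinite _))]
  rw [← e1, ← e2]
  exact_mod_cast Set.ncard_le_ncard hdiff (Set.toFinite _)

variable [Fintype V]

lemma cum_add_le (w : V → V → ℝ) (e : V ≃ Fin (Fintype.card V))
    (hw : ∀ u v : V, 0 ≤ w u v) {v u₁ u₂ : V} (h : e u₁ < e u₂) :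
    cumBefore w e v u₁ + w u₁ v ≤ cumBefore w e v u₂ := by
  have hnotmem : u₁ ∉ Finset.univ.filter (fun u' => e u' < e u₁) := by simp
  have hsub : insert u₁ (Finset.univ.filter (fun u' => e u' < e u₁)) ⊆
      Finset.univ.filter (fun u' => e u' < e u₂) := by
    intro x hx
    simp only [Finset.mem_insert, Finset.mem_filter, Finset.mem_univ, true_and] at *
    rcases hx with rfl | hx
    · exact h
    · exact hx.trans h
  calc cumBefore w e v u₁ + w u₁ v
      = ∑ u' ∈ insert u₁ (Finset.univ.filter (fun u' => e u' < e u₁)), w u' v := by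
        rw [Finset.sum_insert hnotmem]; exact (add_comm _ _)
    _ ≤ cumBefore w e v u₂ :=
        Finset.sum_le_sum_of_subset_of_nonneg hsub (fun i _ _ => hw i v)

lemma sampledParent_eq_some_iff (w : V → V → ℝ) (e : V ≃ Fin (Fintype.card V))
    (hw : ∀ u v : V, 0 ≤ w u v) (r : V → ℝ) (v u : V) :
    sampledParent w e r v = some u ↔
      cumBefore w e v u ≤ r v ∧ r v < cumBefore w e v u + w u v := by
  have huniq : ∀ u₁ u₂ : V,
      (cumBefore w e v u₁ ≤ r v ∧ r v < cumBefore w e v u₁ + w u₁ v) →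
      (cumBefore w e v u₂ ≤ r v ∧ r v < cumBefore w e v u₂ + w u₂ v) → u₁ = u₂ := by
    intro u₁ u₂ h₁ h₂
    by_contra hne
    rcases lt_trichotomy (e u₁) (e u₂) with hlt | heq | hgt
    · have := cum_add_le w e hw (v := v) hlt
      linarith [h₁.2, h₂.1]
    · exact hne (e.injective heq)
    · have := cum_add_le w e hw (v := v) hgt
      linarith [h₂.2, h₁.1]
  constructor
  · intro h
    unfold sampledParent at h
    split at h
    case isTrue hex =>
      have h' : hex.choose = u := Option.some_injective _ h
      exact h' ▸ hex.choose_spec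
    case isFalse => exact absurd h (by simp)
  · intro h
    have hex : ∃ u', cumBefore w e v u' ≤ r v ∧ r v < cumBefore w e v u' + w u' v := ⟨u, h⟩
    unfold sampledParent
    rw [dif_pos hex]
    exact congrArg some (huniq _ _ hex.choose_spec h)

lemma measurableSet_parent_fiber (w : V → V → ℝ) (e : V ≃ Fin (Fintype.card V))
    (hw : ∀ u v : V, 0 ≤ w u v) (v : V) (o : Option V) :
    MeasurableSet {r : V → ℝ | sampledParent w e r v = o} := by
  have hsome : ∀ u : V, MeasurableSet {r : V → ℝ | sampledParent w e r v = some u} := by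
    intro u
    have hset : {r : V → ℝ | sampledParent w e r v = some u} =
        (fun r : V → ℝ => r v) ⁻¹'
          (Set.Ico (cumBefore w e v u) (cumBefore w e v u + w u v)) := by
      ext r
      simp [sampledParent_eq_some_iff w e hw, Set.mem_Ico]
    rw [hset]
    exact measurable_pi_apply v measurableSet_Ico
  cases o with
  | some u => exact hsome u
  | none =>
    have hset : {r : V → ℝ | sampledParent w e r v = none} =
        (⋃ u : V, {r : V → ℝ | sampledParent w e r v = some u})ᶜ := by
      ext r
      simp only [Set.mem_compl_iff, Set.mem_iUnion, Set.mem_setOf_eq]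
      constructor
      · intro h ⟨u, hu⟩
        rw [h] at hu; exact Option.some_ne_none u hu.symm
      · intro h
        cases hv : sampledParent w e r v with
        | none => rfl
        | some a => exact absurd ⟨a, hv⟩ h
    rw [hset]
    exact (MeasurableSet.iUnion fun u => hsome u).compl

lemma measurableSet_sign_fiber (qp qm : V → ℝ) (v : V) (s : SignType) :
    MeasurableSet {y : V → ℝ | sampledSign qp qm y v = s} := by
  have hm : Measurable fun y : V → ℝ => y v := measurable_pi_apply v
  cases s with
  | pos =>
    have hset : {y : V → ℝ | sampledSign qp qm y v = SignType.pos} =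
        (fun y : V → ℝ => y v) ⁻¹' Set.Iio (qp v) := by
      ext y
      simp only [Set.mem_setOf_eq, Set.mem_preimage, Set.mem_Iio, sampledSign]
      split_ifs with h1 h2 <;> simp_all
    rw [hset]; exact hm measurableSet_Iio
  | zero =>
    have hset : {y : V → ℝ | sampledSign qp qm y v = SignType.zero} =
        (fun y : V → ℝ => y v) ⁻¹' Set.Ico (qp v) (qp v + (1 - (qp v + qm v))) := by
      ext y
      simp only [Set.mem_setOf_eq, Set.mem_preimage, Set.mem_Ico, sampledSign]
      split_ifs with h1 h2 <;> simp_all <;> linarith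
    rw [hset]; exact hm measurableSet_Ico
  | neg =>
    have hset : {y : V → ℝ | sampledSign qp qm y v = SignType.neg} =
        (fun y : V → ℝ => y v) ⁻¹' Set.Ici (max (qp v) (qp v + (1 - (qp v + qm v)))) := by
      ext y
      simp only [Set.mem_setOf_eq, Set.mem_preimage, Set.mem_Ici, le_max_iff, max_le_iff,
        sampledSign]
      split_ifs with h1 h2 <;> simp_all <;> constructor <;> linarith
    rw [hset]; exact hm measurableSet_Ici

variable [DecidableEq V]

lemma measurable_integrand (w : V → V → ℝ) (qp qm : V → ℝ)
    (e : V ≃ Fin (Fintype.card V)) (hw : ∀ u v : V, 0 ≤ w u v) (S : Finset V) :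
    Measurable fun ω : (V → ℝ) × (V → ℝ) =>
      ((Bpos (sampledParent w e ω.1) (sampledSign qp qm ω.2) S).ncard : ℝ) := by
  have hrw : (fun ω : (V → ℝ) × (V → ℝ) =>
      ((Bpos (sampledParent w e ω.1) (sampledSign qp qm ω.2) S).ncard : ℝ)) =
      fun ω => ∑ x : (V → Option V) × (V → SignType),
        if (∀ v, sampledParent w e ω.1 v = x.1 v) ∧
            (∀ v, sampledSign qp qm ω.2 v = x.2 v)
        then ((Bpos x.1 x.2 S).ncard : ℝ) else 0 := by
    funext ω
    have hiff : ∀ x : (V → Option V) × (V → SignType),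
        ((∀ v, sampledParent w e ω.1 v = x.1 v) ∧
          (∀ v, sampledSign qp qm ω.2 v = x.2 v)) ↔
        x = (fun v => sampledParent w e ω.1 v, fun v => sampledSign qp qm ω.2 v) := by
      intro x
      constructor
      · rintro ⟨ha, hb⟩
        exact Prod.ext (funext fun v => (ha v).symm) (funext fun v => (hb v).symm)
      · rintro rfl
        exact ⟨fun v => rfl, fun v => rfl⟩
    simp only [hiff]
    rw [Finset.sum_ite_eq' Finset.univ
      ((fun v => sampledParent w e ω.1 v, fun v => sampledSign qp qm ω.2 v))
      (fun x : (V → Option V) × (V → SignType) => ((Bpos x.1 x.2 S).ncard : ℝ))]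
    simp
  rw [hrw]
  apply Finset.measurable_sum
  intro x _
  refine Measurable.ite ?_ measurable_const measurable_const
  have hset : {ω : (V → ℝ) × (V → ℝ) |
      (∀ v, sampledParent w e ω.1 v = x.1 v) ∧ (∀ v, sampledSign qp qm ω.2 v = x.2 v)} =
      (⋂ v, Prod.fst ⁻¹' {r : V → ℝ | sampledParent w e r v = x.1 v}) ∩
        (⋂ v, Prod.snd ⁻¹' {y : V → ℝ | sampledSign qp qm y v = x.2 v}) := by
    ext ω
    simp [Set.mem_iInter]
  rw [hset]
  exact (MeasurableSet.iInter fun v =>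
      measurable_fst (measurableSet_parent_fiber w e hw v (x.1 v))).inter
    (MeasurableSet.iInter fun v =>
      measurable_snd (measurableSet_sign_fiber qp qm v (x.2 v)))

end Aux

instance : IsProbabilityMeasure unif := by
  constructor
  simp [unif, Real.volume_Icc]

section Int

variable {V : Type*} [Fintype V] [DecidableEq V]

lemma integrable_integrand (w : V → V → ℝ) (qp qm : V → ℝ)
    (e : V ≃ Fin (Fintype.card V)) (hw : ∀ u v : V, 0 ≤ w u v) (S : Finset V) :
    Integrable (fun ω : (V → ℝ) × (V → ℝ) =>
        ((Bpos (sampledParent w e ω.1) (sampledSign qp qm ω.2) S).ncard : ℝ))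
      ((Measure.pi fun _ : V => unif).prod (Measure.pi fun _ : V => unif)) := by
  refine Integrable.mono' (integrable_const (Fintype.card V : ℝ))
    (measurable_integrand w qp qm e hw S).aestronglyMeasurable
    (Filter.Eventually.of_forall fun ω => ?_)
  rw [Real.norm_natCast]
  have h1 : (Bpos (sampledParent w e ω.1) (sampledSign qp qm ω.2) S).ncard ≤
      (Set.univ : Set V).ncard :=
    Set.ncard_le_ncard (Set.subset_univ _) (Set.toFinite _)
  have h2 : (Set.univ : Set V).ncard = Fintype.card V := by
    rw [Set.ncard_univ, Nat.card_eq_fintype_card]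
  exact_mod_cast h2 ▸ h1

end Int

/-- the expected positive spread `f̃^+` of the TS-N model is a monotone and
submodular function of the seed set. -/
theorem tsnExpPos_monotone_submodular {V : Type*} [Fintype V] [DecidableEq V]
    (w : V → V → ℝ) (qp qm : V → ℝ) (e : V ≃ Fin (Fintype.card V))
    (hw_nonneg : ∀ u v : V, 0 ≤ w u v)
    (hw_sum : ∀ v : V, ∑ u : V, w u v ≤ 1)
    (hqp : ∀ v : V, 0 ≤ qp v) (hqm : ∀ v : V, 0 ≤ qm v)
    (hr : ∀ v : V, qp v + qm v ≤ 1) :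
    (∀ S T : Finset V, S ⊆ T → tsnExpPos w qp qm e S ≤ tsnExpPos w qp qm e T) ∧
    (∀ S T : Finset V, ∀ v : V, S ⊆ T → v ∉ T →
      tsnExpPos w qp qm e (insert v T) - tsnExpPos w qp qm e T ≤
        tsnExpPos w qp qm e (insert v S) - tsnExpPos w qp qm e S) := by
  have hint : ∀ S : Finset V, Integrable (fun ω : (V → ℝ) × (V → ℝ) =>
      ((Bpos (sampledParent w e ω.1) (sampledSign qp qm ω.2) S).ncard : ℝ))
      ((Measure.pi fun _ : V => unif).prod (Measure.pi fun _ : V => unif)) :=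
    fun S => integrable_integrand w qp qm e hw_nonneg S
  constructor
  · intro S T hST
    refine integral_mono (hint S) (hint T) fun ω => ?_
    exact Nat.cast_le.mpr <| Set.ncard_le_ncard
      (Bpos_mono (sampledParent w e ω.1) (sampledSign qp qm ω.2) hST) (Set.toFinite _)
  · intro S T v hST hvT
    unfold tsnExpPos
    rw [← integral_sub (hint (insert v T)) (hint T),
      ← integral_sub (hint (insert v S)) (hint S)]
    exact integral_mono ((hint (insert v T)).sub (hint T))
      ((hint (insert v S)).sub (hint S))
      (fun ω => Bpos_card_ineq _ _ v hST)
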